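/- In the setting of the previous statement (k = 2, T = 2π, ψ(t,(x₁,x₂)) = (−x₂, x₁), φ(t,(x₁,x₂)) = (0, f(t, −x₁, x₂)) with f continuous and 2π-periodic in t, ξ(a,θ) = (−a cos θ, a sin θ), R(θ) the rotation matrix with rows (cos θ, sin θ) and (−sin θ, cos θ), and H(a,θ) = ∫₀^{2π} ( sin τ · f(τ+θ, a cos τ, −a sin τ), cos τ · f(τ+θ, a cos τ, −a sin τ) ) dτ), let a₀, θ₀ ∈ ℝ, 0 < δ ≤ min(a₀, π), and V = (a₀−δ, a₀+δ) × (θ₀−δ, θ₀+δ). Assume H(a,θ) ≠ 0 for all (a,θ) on the boundary ∂V of V. Then for each s ∈ ℝ the map Γ : [0,1] × ∂V → ℝ², Γ(λ, (a,θ)) = R(λθ) H(a,θ), is a continuous homotopy satisfying Γ(λ, (a,θ)) ≠ 0 for all λ ∈ [0,1] and (a,θ) ∈ ∂V, with Γ(0, (a,θ)) = H(a,θ) and Γ(1, (a,θ)) = η(2π, s, ξ(a,θ)) − η(0, s, ξ(a,θ)); that is, the vector fields H(·,·) and η(2π, s, ξ(·,·)) − η(0, s, ξ(·,·)) are homotopic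 without zeros on ∂V. -/

import Mathlib

open Set Metric

/-- The point of `ℝ²` with polar-type coordinates `ξ(a,θ) = (-a cos θ, a sin θ)`. -/
noncomputable def xiFun (a θ : ℝ) : EuclideanSpace ℝ (Fin 2) :=
  !₂[-(a * Real.cos θ), a * Real.sin θ]

/-- The matrix with rows `(cos θ, sin θ)` and `(-sin θ, cos θ)` acting on `ℝ²`. -/
noncomputable def rotMat (θ : ℝ) (v : EuclideanSpace ℝ (Fin 2)) : EuclideanSpace ℝ (Fin 2) :=
  !₂[Real.cos θ * v 0 + Real.sin θ * v 1, -Real.sin θ * v 0 + Real.cos θ * v 1]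

/-- `H(a,θ) = ∫₀^{2π} (sin τ · f(τ+θ, a cos τ, -a sin τ), cos τ · f(τ+θ, a cos τ, -a sin τ)) dτ`. -/
noncomputable def Hfun (f : ℝ → ℝ → ℝ → ℝ) (a θ : ℝ) : EuclideanSpace ℝ (Fin 2) :=
  ∫ τ in (0 : ℝ)..(2 * Real.pi),
    (!₂[Real.sin τ * f (τ + θ) (a * Real.cos τ) (-(a * Real.sin τ)),
       Real.cos τ * f (τ + θ) (a * Real.cos τ) (-(a * Real.sin τ))] :
      EuclideanSpace ℝ (Fin 2))

noncomputable def rotCLM' (θ : ℝ) : EuclideanSpace ℝ (Fin 2) →L[ℝ] EuclideanSpace ℝ (Fin 2) :=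
  LinearMap.toContinuousLinearMap
  { toFun := fun v => !₂[Real.cos θ * v 0 + Real.sin θ * v 1, -Real.sin θ * v 0 + Real.cos θ * v 1]
    map_add' := by
      intro v w; ext i
      fin_cases i <;> simp [PiLp.add_apply] <;> ring
    map_smul' := by
      intro c v; ext i
      fin_cases i <;> simp [PiLp.smul_apply, smul_eq_mul] <;> ring }

lemma rotCLM'_eq (θ : ℝ) : ⇑(rotCLM' θ) = rotMat θ := rfl

noncomputable def Jclm' : EuclideanSpace ℝ (Fin 2) →L[ℝ] EuclideanSpace ℝ (Fin 2) :=
  LinearMap.toContinuousLinearMap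
  { toFun := fun v => !₂[-(v 1), v 0]
    map_add' := by
      intro v w; ext i
      fin_cases i <;> simp [PiLp.add_apply] <;> ring
    map_smul' := by
      intro c v; ext i
      fin_cases i <;> simp [PiLp.smul_apply, smul_eq_mul] }

lemma Jclm'_apply (v : EuclideanSpace ℝ (Fin 2)) : Jclm' v = !₂[-(v 1), v 0] := rfl

lemma contVec {X : Type*} [TopologicalSpace X] {g0 g1 : X → ℝ}
    (h0 : Continuous g0) (h1 : Continuous g1) :
    Continuous fun x => (!₂[g0 x, g1 x] : EuclideanSpace ℝ (Fin 2)) := by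
  have : Continuous fun x => (EuclideanSpace.equiv (Fin 2) ℝ).symm ![g0 x, g1 x] :=
    (EuclideanSpace.equiv (Fin 2) ℝ).symm.continuous.comp
      (continuous_pi fun i => by fin_cases i <;> simpa)
  exact this

lemma hasDerivAt_euclidean {w : ℝ → EuclideanSpace ℝ (Fin 2)} {W : EuclideanSpace ℝ (Fin 2)}
    {t : ℝ} (h : ∀ i, HasDerivAt (fun u => w u i) (W i) t) : HasDerivAt w W t := by
  have hp : HasDerivAt (fun u => (fun i => w u i : Fin 2 → ℝ)) (fun i => W i) t :=
    hasDerivAt_pi.2 h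
  exact ((EuclideanSpace.equiv (Fin 2) ℝ).symm.toContinuousLinearMap.hasFDerivAt).comp_hasDerivAt
    t hp

lemma rotMat_ne_zero {θ : ℝ} {v : EuclideanSpace ℝ (Fin 2)} (hv : v ≠ 0) : rotMat θ v ≠ 0 := by
  intro h
  apply hv
  have h0 : Real.cos θ * v 0 + Real.sin θ * v 1 = 0 := by
    have := congrArg (fun x => x 0) h; simpa [rotMat] using this
  have h1 : -Real.sin θ * v 0 + Real.cos θ * v 1 = 0 := by
    have := congrArg (fun x => x 1) h; simpa [rotMat] using this
  have hsc := Real.sin_sq_add_cos_sq θ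
  ext i
  fin_cases i
  · show v 0 = 0
    linear_combination Real.cos θ * h0 - Real.sin θ * h1 - v 0 * hsc
  · show v 1 = 0
    linear_combination Real.sin θ * h0 + Real.cos θ * h1 - v 1 * hsc

lemma rotMat_zero (v : EuclideanSpace ℝ (Fin 2)) : rotMat 0 v = v := by
  ext i; fin_cases i <;> simp [rotMat]

/-- If `H` does not vanish on the boundary of `V = (a₀-δ, a₀+δ) × (θ₀-δ, θ₀+δ)`
(`0 < δ ≤ min a₀ π`), then for each `s` the vector fields `H(·,·)` and
`η(2π, s, ξ(·,·)) - η(0, s, ξ(·,·))` are homotopic without zeros on `∂V`, via the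
homotopy `Γ(λ,(a,θ)) = R(λθ) H(a,θ)`. -/
theorem H_homotopic_eta_difference
    (f : ℝ → ℝ → ℝ → ℝ)
    (hf : Continuous fun p : ℝ × ℝ × ℝ => f p.1 p.2.1 p.2.2)
    (hfT : ∀ t u v, f (t + 2 * Real.pi) u v = f t u v)
    (φ ψ : ℝ → EuclideanSpace ℝ (Fin 2) → EuclideanSpace ℝ (Fin 2))
    (hψdef : ∀ t v, ψ t v = ![-(v 1), v 0])
    (hφdef : ∀ t v, φ t v = ![0, f t (-(v 0)) (v 1)])
    -- `Ω (·) t₀ ξ` is the solution of `ẋ = ψ(t,x)`, `x(t₀) = ξ`; here the rotation by angle `t`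
    (Ω : ℝ → ℝ → EuclideanSpace ℝ (Fin 2) → EuclideanSpace ℝ (Fin 2))
    (hΩ0 : ∀ t₀ ξ, Ω t₀ t₀ ξ = ξ)
    (hΩ' : ∀ t t₀ ξ, HasDerivAt (fun s => Ω s t₀ ξ) (ψ t (Ω t t₀ ξ)) t)
    (hΩrot : ∀ t ξ, Ω t 0 ξ =
      ![Real.cos t * ξ 0 - Real.sin t * ξ 1, Real.sin t * ξ 0 + Real.cos t * ξ 1])
    -- `η (·) s ξ` is the solution of the linear system (2) with `y(s) = 0`
    (η : ℝ → ℝ → EuclideanSpace ℝ (Fin 2) → EuclideanSpace ℝ (Fin 2))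
    (hη0 : ∀ s ξ, η s s ξ = 0)
    (hη : ∀ t s ξ, HasDerivAt (fun u => η u s ξ)
      (φ t (Ω t 0 ξ) + fderiv ℝ (fun x => ψ t x) (Ω t 0 ξ) (η t s ξ)) t)
    -- the rectangle `V` and the nonvanishing of `H` on its boundary
    (a₀ θ₀ δ : ℝ) (hδ : 0 < δ) (hδa : δ ≤ a₀) (hδπ : δ ≤ Real.pi)
    (V : Set (ℝ × ℝ))
    (hV : V = Ioo (a₀ - δ) (a₀ + δ) ×ˢ Ioo (θ₀ - δ) (θ₀ + δ))
    (hHne : ∀ p ∈ frontier V, Hfun f p.1 p.2 ≠ 0) :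
    ∀ s : ℝ, ∃ Γ : ℝ × (ℝ × ℝ) → EuclideanSpace ℝ (Fin 2),
      (∀ l p, Γ (l, p) = rotMat (l * p.2) (Hfun f p.1 p.2)) ∧
      ContinuousOn Γ (Icc (0 : ℝ) 1 ×ˢ frontier V) ∧
      (∀ l ∈ Icc (0 : ℝ) 1, ∀ p ∈ frontier V, Γ (l, p) ≠ 0) ∧
      (∀ p ∈ frontier V, Γ (0, p) = Hfun f p.1 p.2) ∧
      (∀ p ∈ frontier V,
        Γ (1, p) = η (2 * Real.pi) s (xiFun p.1 p.2) - η 0 s (xiFun p.1 p.2)) := by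
  intro s
  refine ⟨fun q => rotMat (q.1 * q.2.2) (Hfun f q.2.1 q.2.2), fun l p => rfl, ?_, ?_, ?_, ?_⟩
  · -- continuity
    have hH : Continuous fun p : ℝ × ℝ => Hfun f p.1 p.2 := by
      apply intervalIntegral.continuous_parametric_intervalIntegral_of_continuous'
        (μ := MeasureTheory.volume)
      have hcomp : Continuous fun x : (ℝ × ℝ) × ℝ =>
          f (x.2 + x.1.2) (x.1.1 * Real.cos x.2) (-(x.1.1 * Real.sin x.2)) :=
        hf.comp (by fun_prop :
          Continuous fun x : (ℝ × ℝ) × ℝ =>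
            (x.2 + x.1.2, x.1.1 * Real.cos x.2, -(x.1.1 * Real.sin x.2)))
      apply contVec
      · exact (Real.continuous_sin.comp continuous_snd).mul hcomp
      · exact (Real.continuous_cos.comp continuous_snd).mul hcomp
    have hHq : Continuous fun q : ℝ × ℝ × ℝ => Hfun f q.2.1 q.2.2 :=
      hH.comp (by fun_prop)
    have h0 : ∀ i, Continuous fun q : ℝ × ℝ × ℝ => Hfun f q.2.1 q.2.2 i := fun i =>
      (EuclideanSpace.proj i).continuous.comp hHq
    have : Continuous fun q : ℝ × ℝ × ℝ => rotMat (q.1 * q.2.2) (Hfun f q.2.1 q.2.2) := by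
      unfold rotMat
      apply contVec
      · exact ((Real.continuous_cos.comp (by fun_prop)).mul (h0 0)).add
          ((Real.continuous_sin.comp (by fun_prop)).mul (h0 1))
      · exact (((Real.continuous_sin.comp (by fun_prop)).neg).mul (h0 0)).add
          ((Real.continuous_cos.comp (by fun_prop)).mul (h0 1))
    exact this.continuousOn
  · intro l _ p hp
    exact rotMat_ne_zero (hHne p hp)
  · intro p _
    simp only [zero_mul, rotMat_zero]
  · intro p _
    obtain ⟨a, θ⟩ := p
    show rotMat (1 * θ) (Hfun f a θ) = η (2 * Real.pi) s (xiFun a θ) - η 0 s (xiFun a θ)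
    set ξ := xiFun a θ with hξ
    set g : ℝ → ℝ := fun t => f t (a * Real.cos (t - θ)) (-(a * Real.sin (t - θ))) with hg
    have hgc : Continuous g :=
      hf.comp (by fun_prop :
        Continuous fun t : ℝ => (t, a * Real.cos (t - θ), -(a * Real.sin (t - θ))))
    set F : ℝ → EuclideanSpace ℝ (Fin 2) :=
      fun t => !₂[Real.sin t * g t, Real.cos t * g t] with hF
    have hFc : Continuous F := contVec (Real.continuous_sin.mul hgc) (Real.continuous_cos.mul hgc)
    have hΩξ : ∀ t, Ω t 0 ξ = ![-(a * Real.cos (t - θ)), -(a * Real.sin (t - θ))] := by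
      intro t
      rw [hΩrot]
      funext i
      fin_cases i <;> simp [hξ, xiFun, Real.cos_sub, Real.sin_sub] <;> ring
    have hφΩ : ∀ t, φ t (Ω t 0 ξ) = ![0, g t] := by
      intro t
      rw [hφdef, hΩξ t]
      funext i
      fin_cases i <;> simp [hg]
    have hDψ : ∀ (t : ℝ) (x : EuclideanSpace ℝ (Fin 2)),
        fderiv ℝ (fun x => ψ t x) x = Jclm' := by
      intro t x
      have he : (fun x : EuclideanSpace ℝ (Fin 2) => ψ t x) = ⇑Jclm' :=
        funext fun v => by ext i; rw [hψdef t v]; rfl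
      rw [he]
      exact Jclm'.fderiv
    set y : ℝ → EuclideanSpace ℝ (Fin 2) := fun t => η t s ξ with hy
    have hy' : ∀ t, HasDerivAt y (φ t (Ω t 0 ξ) + Jclm' (y t)) t := by
      intro t
      have h := hη t s ξ
      rw [hDψ t] at h
      exact h
    have hy0 : ∀ t, HasDerivAt (fun u => y u 0) (-(y t 1)) t := by
      intro t
      have h := (EuclideanSpace.proj (0 : Fin 2) :
        EuclideanSpace ℝ (Fin 2) →L[ℝ] ℝ).hasFDerivAt.comp_hasDerivAt t (hy' t)
      have hval : (EuclideanSpace.proj (0 : Fin 2) : EuclideanSpace ℝ (Fin 2) →L[ℝ] ℝ)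
          (φ t (Ω t 0 ξ) + Jclm' (y t)) = -(y t 1) := by
        show (φ t (Ω t 0 ξ) + Jclm' (y t)) 0 = -(y t 1)
        rw [PiLp.add_apply, hφΩ t, Jclm'_apply]
        simp
      rw [hval] at h
      exact h
    have hy1 : ∀ t, HasDerivAt (fun u => y u 1) (g t + y t 0) t := by
      intro t
      have h := (EuclideanSpace.proj (1 : Fin 2) :
        EuclideanSpace ℝ (Fin 2) →L[ℝ] ℝ).hasFDerivAt.comp_hasDerivAt t (hy' t)
      have hval : (EuclideanSpace.proj (1 : Fin 2) : EuclideanSpace ℝ (Fin 2) →L[ℝ] ℝ)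
          (φ t (Ω t 0 ξ) + Jclm' (y t)) = g t + y t 0 := by
        show (φ t (Ω t 0 ξ) + Jclm' (y t)) 1 = g t + y t 0
        rw [PiLp.add_apply, hφΩ t, Jclm'_apply]
        simp
      rw [hval] at h
      exact h
    set w : ℝ → EuclideanSpace ℝ (Fin 2) := fun t => rotMat t (y t) with hw
    have hw' : ∀ t, HasDerivAt w (F t) t := by
      intro t
      apply hasDerivAt_euclidean
      intro i
      fin_cases i
      · have h := ((Real.hasDerivAt_cos t).mul (hy0 t)).add ((Real.hasDerivAt_sin t).mul (hy1 t))
        have heq : (fun u => Real.cos u * y u 0 + Real.sin u * y u 1) = fun u => w u 0 := by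
          funext u; simp [hw, rotMat]
        change HasDerivAt (fun u => Real.cos u * y u 0 + Real.sin u * y u 1) _ t at h
        rw [heq] at h
        have harith : -Real.sin t * y t 0 + Real.cos t * -(y t 1) +
            (Real.cos t * y t 1 + Real.sin t * (g t + y t 0)) = Real.sin t * g t := by ring
        rw [harith] at h
        exact h
      · have h := (((Real.hasDerivAt_sin t).neg.mul (hy0 t))).add
          ((Real.hasDerivAt_cos t).mul (hy1 t))
        have heq : (fun u => -Real.sin u * y u 0 + Real.cos u * y u 1) = fun u => w u 1 := by
          funext u; simp [hw, rotMat]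
        change HasDerivAt (fun u => -Real.sin u * y u 0 + Real.cos u * y u 1)
          (-Real.cos t * y t 0 + -Real.sin t * -(y t 1) +
            (-Real.sin t * y t 1 + Real.cos t * (g t + y t 0))) t at h
        rw [heq] at h
        have harith : -Real.cos t * y t 0 + -Real.sin t * -(y t 1) +
            (-Real.sin t * y t 1 + Real.cos t * (g t + y t 0)) = Real.cos t * g t := by ring
        rw [harith] at h
        exact h
    have hInt : IntervalIntegrable F MeasureTheory.volume 0 (2 * Real.pi) :=
      hFc.intervalIntegrable _ _
    have hftc : ∫ t in (0:ℝ)..(2 * Real.pi), F t = w (2 * Real.pi) - w 0 :=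
      intervalIntegral.integral_eq_sub_of_hasDerivAt (fun t _ => hw' t) hInt
    have hw2π : w (2 * Real.pi) = y (2 * Real.pi) := by
      ext i; fin_cases i <;> simp [hw, rotMat, Real.cos_two_pi, Real.sin_two_pi]
    have hw0 : w 0 = y 0 := by
      ext i; fin_cases i <;> simp [hw, rotMat]
    have hrot : rotMat θ (Hfun f a θ) = ∫ τ in (0:ℝ)..(2 * Real.pi), F (τ + θ) := by
      have hcomp : Continuous fun τ : ℝ =>
          f (τ + θ) (a * Real.cos τ) (-(a * Real.sin τ)) :=
        hf.comp (by fun_prop :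
          Continuous fun τ : ℝ => (τ + θ, a * Real.cos τ, -(a * Real.sin τ)))
      set G : ℝ → EuclideanSpace ℝ (Fin 2) := fun τ =>
        !₂[Real.sin τ * f (τ + θ) (a * Real.cos τ) (-(a * Real.sin τ)),
          Real.cos τ * f (τ + θ) (a * Real.cos τ) (-(a * Real.sin τ))] with hG
      have hGc : Continuous G :=
        contVec (Real.continuous_sin.mul hcomp) (Real.continuous_cos.mul hcomp)
      have hIc : IntervalIntegrable G MeasureTheory.volume 0 (2 * Real.pi) :=
        hGc.intervalIntegrable _ _
      have hcc := (rotCLM' θ).intervalIntegral_comp_comm hIc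
      rw [rotCLM'_eq] at hcc
      rw [Hfun, ← hcc]
      apply intervalIntegral.integral_congr
      intro τ _
      ext i
      fin_cases i <;>
        simp [hG, rotMat, hF, hg, Real.sin_add, Real.cos_add, add_sub_cancel_right] <;> ring
    have hshift : (∫ τ in (0:ℝ)..(2 * Real.pi), F (τ + θ)) =
        ∫ t in θ..(θ + 2 * Real.pi), F t := by
      rw [intervalIntegral.integral_comp_add_right]
      rw [zero_add, add_comm]
    have hper : Function.Periodic F (2 * Real.pi) := by
      intro t
      ext i
      fin_cases i <;>
        simp [hF, hg, hfT, Real.sin_add_two_pi, Real.cos_add_two_pi,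
          show t + 2 * Real.pi - θ = (t - θ) + 2 * Real.pi by ring]
    have hperInt := hper.intervalIntegral_add_eq θ 0
    rw [one_mul, hrot, hshift, hperInt, zero_add, hftc, hw2π, hw0]
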